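/- arXiv:1409.1472 — 2 statements merged into one kernel-verified Lean document; each statement's English description precedes it below -/
import Mathlib

section
/- Let k ≥ 2 and b ≥ 2 be integers, ρ > 0 a real number, and let (a_n)_{n≥1} be a strictly increasing sequence of positive integers with lim_{n→∞} a_{n+1}/a_n = k(ρ+1). Let ζ = Σ_{n≥1} b^{−a_n}. Then for all pairs (x, y) ∈ ℤ² with x sufficiently large, the inequality |ζx − y| ≤ x^{−k/(k−1)} implies that (x, y) is an integral multiple of (b^{a_n}, Σ_{i≤n} b^{a_n − a_i}) for some n ≥ 1. -/
/-- Distance from a real number to the nearest integer. -/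
noncomputable def distNearestInt (a : ℝ) : ℝ := |a - round a|

/-- `max_{1 ≤ j ≤ k} ‖ζ^j x‖` for a positive integer `x`. -/
noncomputable def maxDist (k : ℕ) (ζ : ℝ) (x : ℕ) : ℝ :=
  ⨆ j ∈ Finset.Icc 1 k, distNearestInt (ζ ^ j * x)

/-- The approximation constant `λ_k(ζ)`, as an extended real number in `[0,∞]`. -/
noncomputable def lambdaConst (k : ℕ) (ζ : ℝ) : EReal :=
  sSup (insert (0 : EReal) {e : EReal | ∃ η : ℝ, e = (η : EReal) ∧
    {x : ℕ | 0 < x ∧ 0 < maxDist k ζ x ∧ maxDist k ζ x ≤ (x : ℝ) ^ (-η)}.Infinite})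

/-- The uniform approximation constant `λ̂_k(ζ)`, as an extended real number in `[0,∞]`. -/
noncomputable def lambdaHatConst (k : ℕ) (ζ : ℝ) : EReal :=
  sSup (insert (0 : EReal) {e : EReal | ∃ η : ℝ, e = (η : EReal) ∧
    ∃ X₀ : ℝ, ∀ X : ℝ, X₀ ≤ X → ∃ x : ℕ, 1 ≤ x ∧ (x : ℝ) ≤ X ∧
      0 < maxDist k ζ x ∧ maxDist k ζ x ≤ X ^ (-η)})

/-- The dual approximation constant `w_k(ζ)`, as an extended real number in `[0,∞]`. -/
noncomputable def wConst (k : ℕ) (ζ : ℝ) : EReal :=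
  sSup (insert (0 : EReal) {e : EReal | ∃ ν : ℝ, e = (ν : EReal) ∧
    ∀ X₀ : ℝ, ∃ X : ℝ, X₀ ≤ X ∧ ∃ p : Fin (k + 1) → ℤ,
      (∀ j, |(p j : ℝ)| ≤ X) ∧
      0 < |∑ j : Fin (k + 1), ζ ^ (j : ℕ) * (p j : ℝ)| ∧
      |∑ j : Fin (k + 1), ζ ^ (j : ℕ) * (p j : ℝ)| ≤ X ^ (-ν)})

/-- The uniform dual approximation constant `ŵ_k(ζ)`, as an extended real number in `[0,∞]`. -/
noncomputable def wHatConst (k : ℕ) (ζ : ℝ) : EReal :=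
  sSup (insert (0 : EReal) {e : EReal | ∃ ν : ℝ, e = (ν : EReal) ∧
    ∃ X₀ : ℝ, ∀ X : ℝ, X₀ ≤ X → ∃ p : Fin (k + 1) → ℤ,
      (∀ j, |(p j : ℝ)| ≤ X) ∧
      0 < |∑ j : Fin (k + 1), ζ ^ (j : ℕ) * (p j : ℝ)| ∧
      |∑ j : Fin (k + 1), ζ ^ (j : ℕ) * (p j : ℝ)| ≤ X ^ (-ν)})



private def s12P (b : ℕ) (a : ℕ → ℕ) (n : ℕ) : ℤ :=
  ∑ i ∈ Finset.range (n+1), (b:ℤ)^(a n - a i)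

private def s12Q (b : ℕ) (a : ℕ → ℕ) (n : ℕ) : ℤ := (b:ℤ)^(a n)

private noncomputable def s12T (b : ℕ) (a : ℕ → ℕ) (n : ℕ) : ℝ :=
  ∑' i : ℕ, ((b:ℝ) ^ (a (i + (n+1))))⁻¹

section aux

variable {b : ℕ} {a : ℕ → ℕ}

private lemma s12_age (ha : StrictMono a) (hapos : ∀ n, 0 < a n) :
    ∀ m, m + 1 ≤ a m := by
  intro m
  induction m with
  | zero => exact hapos 0
  | succ m ih => exact Nat.succ_le_of_lt (lt_of_le_of_lt ih (ha (Nat.lt_succ_self m)))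

private lemma s12_aadd (ha : StrictMono a) : ∀ n i, a n + i ≤ a (n + i) := by
  intro n i
  induction i with
  | zero => simp
  | succ i ih =>
      have h2 : a (n + i) < a (n + i + 1) := ha (Nat.lt_succ_self _)
      rw [show n + (i+1) = (n+i)+1 from rfl]
      omega

private lemma s12_summable (hb : 2 ≤ b) (ha : StrictMono a) (hapos : ∀ n, 0 < a n) :
    Summable (fun m => ((b:ℝ) ^ (a m))⁻¹) := by
  have hb2 : (2:ℝ) ≤ (b:ℝ) := by exact_mod_cast hb
  have hb0 : (0:ℝ) < (b:ℝ) := by linarith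
  refine Summable.of_nonneg_of_le (fun m => by positivity) (fun m => ?_)
    summable_geometric_two
  have h1 : (2:ℝ)^m ≤ (b:ℝ)^(a m) := by
    calc (2:ℝ)^m ≤ (2:ℝ)^(a m) := by
          apply pow_le_pow_right₀ (by norm_num)
          exact le_trans (Nat.le_succ m) (s12_age ha hapos m)
      _ ≤ (b:ℝ)^(a m) := by gcongr
  have h2 : (0:ℝ) < 2^m := by positivity
  calc ((b:ℝ)^(a m))⁻¹ ≤ ((2:ℝ)^m)⁻¹ := inv_anti₀ h2 h1
    _ = (1/2:ℝ)^m := by rw [one_div, inv_pow]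

private lemma s12T_summable (hb : 2 ≤ b) (ha : StrictMono a) (hapos : ∀ n, 0 < a n) (n : ℕ) :
    Summable (fun i => ((b:ℝ) ^ (a (i + (n+1))))⁻¹) :=
  summable_nat_add_iff (f := fun m => ((b:ℝ) ^ (a m))⁻¹) (n+1) |>.mpr
    (s12_summable hb ha hapos)

private lemma s12T_lb (hb : 2 ≤ b) (ha : StrictMono a) (hapos : ∀ n, 0 < a n) (n : ℕ) :
    ((b:ℝ) ^ (a (n+1)))⁻¹ ≤ s12T b a n := by
  have hb0 : (0:ℝ) < (b:ℝ) := by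
    have : (2:ℝ) ≤ (b:ℝ) := by exact_mod_cast hb
    linarith
  have hb0 : (0:ℝ) < (b:ℝ) := by
    have h2 : (2:ℝ) ≤ (b:ℝ) := by exact_mod_cast hb
    linarith
  have h := Summable.le_tsum (s12T_summable hb ha hapos n) 0
    (fun j _ => inv_nonneg.mpr (pow_nonneg hb0.le _))
  simpa [s12T] using h

private lemma s12T_pos (hb : 2 ≤ b) (ha : StrictMono a) (hapos : ∀ n, 0 < a n) (n : ℕ) :
    0 < s12T b a n := by
  have hb0 : (0:ℝ) < (b:ℝ) := by
    have : (2:ℝ) ≤ (b:ℝ) := by exact_mod_cast hb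
    linarith
  exact lt_of_lt_of_le (inv_pos.mpr (pow_pos hb0 _)) (s12T_lb hb ha hapos n)

private lemma s12T_ub (hb : 2 ≤ b) (ha : StrictMono a) (hapos : ∀ n, 0 < a n) (n : ℕ) :
    s12T b a n ≤ 2 * ((b:ℝ) ^ (a (n+1)))⁻¹ := by
  have hb2 : (2:ℝ) ≤ (b:ℝ) := by exact_mod_cast hb
  have hb0 : (0:ℝ) < (b:ℝ) := by linarith
  have hbinv1 : ((b:ℝ))⁻¹ < 1 := inv_lt_one_of_one_lt₀ (by linarith)
  have hbinv0 : (0:ℝ) ≤ ((b:ℝ))⁻¹ := by positivity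
  have hterm : ∀ i : ℕ, ((b:ℝ) ^ (a (i + (n+1))))⁻¹ ≤
      ((b:ℝ) ^ (a (n+1)))⁻¹ * ((b:ℝ)⁻¹)^i := by
    intro i
    have h1 : a (n+1) + i ≤ a (i + (n+1)) := by
      have := s12_aadd ha (n+1) i
      rwa [Nat.add_comm (n+1) i] at this
    have h2 : (b:ℝ)^(a (n+1) + i) ≤ (b:ℝ)^(a (i + (n+1))) := by
      apply pow_le_pow_right₀ (by linarith) h1
    calc ((b:ℝ) ^ (a (i + (n+1))))⁻¹ ≤ ((b:ℝ)^(a (n+1) + i))⁻¹ :=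
          inv_anti₀ (by positivity) h2
      _ = ((b:ℝ) ^ (a (n+1)))⁻¹ * ((b:ℝ)⁻¹)^i := by
          rw [pow_add, mul_inv, inv_pow]
  have hgeo : Summable (fun i : ℕ => ((b:ℝ) ^ (a (n+1)))⁻¹ * ((b:ℝ)⁻¹)^i) :=
    (summable_geometric_of_lt_one hbinv0 hbinv1).mul_left _
  have h3 : s12T b a n ≤ ∑' i : ℕ, ((b:ℝ) ^ (a (n+1)))⁻¹ * ((b:ℝ)⁻¹)^i :=
    Summable.tsum_le_tsum hterm (s12T_summable hb ha hapos n) hgeo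
  have h4 : ∑' i : ℕ, ((b:ℝ) ^ (a (n+1)))⁻¹ * ((b:ℝ)⁻¹)^i
      = ((b:ℝ) ^ (a (n+1)))⁻¹ * (1 - (b:ℝ)⁻¹)⁻¹ := by
    rw [tsum_mul_left, tsum_geometric_of_lt_one hbinv0 hbinv1]
  have h5 : (1 - (b:ℝ)⁻¹)⁻¹ ≤ 2 := by
    have hble : (b:ℝ)⁻¹ ≤ 1/2 := by
      have := inv_anti₀ (by norm_num : (0:ℝ) < 2) hb2
      simpa using this
    have : (1/2:ℝ) ≤ 1 - (b:ℝ)⁻¹ := by linarith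
    calc (1 - (b:ℝ)⁻¹)⁻¹ ≤ (1/2:ℝ)⁻¹ := inv_anti₀ (by norm_num) this
      _ = 2 := by norm_num
  calc s12T b a n ≤ ((b:ℝ) ^ (a (n+1)))⁻¹ * (1 - (b:ℝ)⁻¹)⁻¹ := h4 ▸ h3
    _ ≤ ((b:ℝ) ^ (a (n+1)))⁻¹ * 2 := by
        apply mul_le_mul_of_nonneg_left h5 (by positivity)
    _ = 2 * ((b:ℝ) ^ (a (n+1)))⁻¹ := by ring

private lemma s12_key (hb : 2 ≤ b) (ha : StrictMono a) (hapos : ∀ n, 0 < a n)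
    (ζ : ℝ) (hζ : ζ = ∑' m : ℕ, ((b:ℝ) ^ (a m))⁻¹) (n : ℕ) :
    ζ * ((s12Q b a n : ℤ) : ℝ) = ((s12P b a n : ℤ) : ℝ) + (b:ℝ)^(a n) * s12T b a n := by
  have hb2 : (2:ℝ) ≤ (b:ℝ) := by exact_mod_cast hb
  have hb0 : (0:ℝ) < (b:ℝ) := by linarith
  have hbne : (b:ℝ) ≠ 0 := ne_of_gt hb0
  have hsplit : (∑' m : ℕ, ((b:ℝ) ^ (a m))⁻¹)
      = (∑ m ∈ Finset.range (n+1), ((b:ℝ) ^ (a m))⁻¹) + s12T b a n :=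
    ((s12_summable hb ha hapos).sum_add_tsum_nat_add (n+1)).symm
  have hQ : ((s12Q b a n : ℤ) : ℝ) = (b:ℝ)^(a n) := by
    simp [s12Q]
  have hP : ((s12P b a n : ℤ) : ℝ)
      = ∑ m ∈ Finset.range (n+1), ((b:ℝ) ^ (a m))⁻¹ * (b:ℝ)^(a n) := by
    simp only [s12P]
    push_cast
    refine Finset.sum_congr rfl (fun i hi => ?_)
    have hle : a i ≤ a n := ha.monotone (Nat.lt_succ_iff.mp (Finset.mem_range.mp hi))
    rw [pow_sub₀ _ hbne hle]
    ring
  rw [hζ, hsplit, hQ, hP, add_mul, Finset.sum_mul]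
  ring

private lemma s12_cop (ha : StrictMono a) (n : ℕ) :
    IsCoprime (s12Q b a n) (s12P b a n) := by
  have hdvd : (b:ℤ) ∣ ∑ i ∈ Finset.range n, (b:ℤ)^(a n - a i) := by
    apply Finset.dvd_sum
    intro i hi
    have : a i < a n := ha (Finset.mem_range.mp hi)
    exact dvd_pow_self _ (by omega)
  obtain ⟨s, hs⟩ := hdvd
  have hPn : s12P b a n = (b:ℤ) * s + 1 := by
    rw [s12P, Finset.sum_range_succ, hs, Nat.sub_self, pow_zero]
  have hcb : IsCoprime ((b:ℤ)) (s12P b a n) := ⟨-s, 1, by rw [hPn]; ring⟩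
  exact hcb.pow_left

private lemma s12_mult {x y : ℤ} {n : ℕ} (ha : StrictMono a)
    (hb0 : 0 < b) (h : x * s12P b a n - y * s12Q b a n = 0) :
    ∃ c : ℤ, x = c * (b:ℤ)^(a n) ∧
      y = c * ∑ i ∈ Finset.range (n+1), (b:ℤ)^(a n - a i) := by
  have hQpos : (0:ℤ) < s12Q b a n := by
    have : (0:ℤ) < (b:ℤ) := by exact_mod_cast hb0
    exact pow_pos this _
  have heq : x * s12P b a n = y * s12Q b a n := by linarith
  have hdvd : s12Q b a n ∣ x := by
    apply (s12_cop ha n).dvd_of_dvd_mul_right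
    exact ⟨y, by rw [heq]; ring⟩
  obtain ⟨c, hc⟩ := hdvd
  refine ⟨c, by rw [hc, s12Q]; ring, ?_⟩
  have h3 : s12Q b a n * y = s12Q b a n * (c * s12P b a n) := by
    calc s12Q b a n * y = y * s12Q b a n := by ring
      _ = x * s12P b a n := heq.symm
      _ = (s12Q b a n * c) * s12P b a n := by rw [hc]
      _ = s12Q b a n * (c * s12P b a n) := by ring
  have hy := mul_left_cancel₀ (ne_of_gt hQpos) h3
  rw [hy, s12P]

end aux

private lemma s12_quarter {x t α : ℝ} (hx : 0 < x) (ht : 0 < t) (h : 4 * t ≤ x ^ α) :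
    t * x ^ (-α) ≤ 1/4 := by
  rw [Real.rpow_neg hx.le]
  have h4 : (0:ℝ) < 4*t := by linarith
  have hinv : (x^α)⁻¹ ≤ (4*t)⁻¹ := inv_anti₀ h4 (by linarith)
  calc t * (x^α)⁻¹ ≤ t * (4*t)⁻¹ := mul_le_mul_of_nonneg_left hinv ht.le
    _ = 1/4 := by field_simp

private lemma s12_zero {D : ℤ} (h : |(D:ℝ)| < 1) : D = 0 := by
  by_contra hne
  have h1 : (1:ℤ) ≤ |D| := Int.one_le_abs hne
  have h2 : (1:ℝ) ≤ |(D:ℝ)| := by exact_mod_cast h1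
  linarith

private lemma s12_xalpha {B x α s : ℝ} {m : ℕ} (hB : 2 ≤ B) (hx : 0 < x)
    (hs : B ^ s ≤ x) (hα : 0 ≤ α) (hexp : (m:ℝ) + 2 ≤ α * s) :
    4 * B ^ m ≤ x ^ α := by
  have hB1 : (1:ℝ) < B := by linarith
  have hB0 : (0:ℝ) < B := by linarith
  have h42 : (4:ℝ) ≤ B^2 := by nlinarith
  calc 4 * B ^ m ≤ B^2 * B^m :=
        mul_le_mul_of_nonneg_right h42 (pow_pos hB0 m).le
    _ = B ^ (m + 2) := by rw [pow_add]; ring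
    _ = B ^ ((m:ℝ) + 2) := by
        rw [← Real.rpow_natCast B (m+2)]
        congr 1
        push_cast
        ring
    _ ≤ B ^ (α * s) := (Real.rpow_le_rpow_left_iff hB1).mpr hexp
    _ = (B ^ s) ^ α := by rw [mul_comm, Real.rpow_mul hB0.le]
    _ ≤ x ^ α := Real.rpow_le_rpow (Real.rpow_nonneg hB0.le s) hs hα

private lemma s12_D {b : ℕ} {a : ℕ → ℕ} (hb : 2 ≤ b) (ha : StrictMono a)
    (hapos : ∀ n, 0 < a n) (ζ : ℝ) (hζ : ζ = ∑' m : ℕ, ((b:ℝ) ^ (a m))⁻¹)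
    (x y : ℤ) (n : ℕ) :
    |((x * s12P b a n - y * s12Q b a n : ℤ) : ℝ)| ≤
      |(x:ℝ)| * ((b:ℝ)^(a n) * s12T b a n) + (b:ℝ)^(a n) * |ζ * x - y| := by
  have hkey := s12_key hb ha hapos ζ hζ n
  have hb0 : (0:ℝ) < (b:ℝ) := by
    have : (2:ℝ) ≤ (b:ℝ) := by exact_mod_cast hb
    linarith
  have hQ : ((s12Q b a n : ℤ) : ℝ) = (b:ℝ)^(a n) := by simp [s12Q]
  have hPr : ((s12P b a n : ℤ) : ℝ)
      = ζ * (b:ℝ)^(a n) - (b:ℝ)^(a n) * s12T b a n := by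
    rw [hQ] at hkey; linarith [hkey]
  have e1 : ((x * s12P b a n - y * s12Q b a n : ℤ) : ℝ)
      = (b:ℝ)^(a n) * (ζ*x - y) - (x:ℝ) * ((b:ℝ)^(a n) * s12T b a n) := by
    push_cast
    rw [hPr, hQ]
    ring
  rw [e1]
  calc |(b:ℝ)^(a n) * (ζ*x - y) - (x:ℝ) * ((b:ℝ)^(a n) * s12T b a n)|
      ≤ |(b:ℝ)^(a n) * (ζ*x - y)| + |(x:ℝ) * ((b:ℝ)^(a n) * s12T b a n)| :=
        abs_sub _ _
    _ = (b:ℝ)^(a n) * |ζ*x - y| + |(x:ℝ)| * ((b:ℝ)^(a n) * s12T b a n) := by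
        rw [abs_mul, abs_mul, abs_of_pos (pow_pos hb0 _),
          abs_of_pos (mul_pos (pow_pos hb0 _) (s12T_pos hb ha hapos n))]
    _ = |(x:ℝ)| * ((b:ℝ)^(a n) * s12T b a n) + (b:ℝ)^(a n) * |ζ*x - y| := by ring

set_option maxHeartbeats 2000000 in
theorem stmt12 (k b : ℕ) (hk : 2 ≤ k) (hb : 2 ≤ b) (ρ : ℝ) (hρ : 0 < ρ)
    (a : ℕ → ℕ) (ha : StrictMono a) (hapos : ∀ n, 0 < a n)
    (hlim : Filter.Tendsto (fun n => (a (n + 1) : ℝ) / (a n : ℝ)) Filter.atTop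
      (nhds ((k : ℝ) * (ρ + 1))))
    (ζ : ℝ) (hζ : ζ = ∑' n : ℕ, ((b : ℝ) ^ (a n))⁻¹) :
    ∃ X : ℤ, ∀ x y : ℤ, X ≤ x →
      |ζ * x - y| ≤ (x : ℝ) ^ (-(k : ℝ) / ((k : ℝ) - 1)) →
      ∃ (n : ℕ) (c : ℤ), x = c * (b : ℤ) ^ (a n) ∧
        y = c * ∑ i ∈ Finset.range (n + 1), (b : ℤ) ^ (a n - a i) := by
  classical
  have hk2 : (2:ℝ) ≤ (k:ℝ) := by exact_mod_cast hk
  have hkpos : (0:ℝ) < (k:ℝ) - 1 := by linarith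
  have hk0 : (0:ℝ) < (k:ℝ) := by linarith
  set α : ℝ := (k:ℝ) / ((k:ℝ) - 1) with hα
  have hα1 : 1 < α := by rw [hα, lt_div_iff₀ hkpos]; linarith
  have hαpos : (0:ℝ) < α := by linarith
  have hb2 : (2:ℝ) ≤ (b:ℝ) := by exact_mod_cast hb
  have hb0 : (0:ℝ) < (b:ℝ) := by linarith
  -- eventual growth facts
  have hstep : (k:ℝ) + (k:ℝ)*ρ/2 < (k:ℝ) * (ρ + 1) := by nlinarith
  have hev : ∀ᶠ n in Filter.atTop,
      (k:ℝ) + (k:ℝ)*ρ/2 ≤ (a (n+1) : ℝ) / (a n : ℝ) :=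
    hlim.eventually (eventually_ge_nhds hstep)
  obtain ⟨N₁, hN₁⟩ := Filter.eventually_atTop.mp hev
  have hG : ∀ m, N₁ ≤ m → ((k:ℝ) + (k:ℝ)*ρ/2) * (a m : ℝ) ≤ (a (m+1) : ℝ) := by
    intro m hm
    have h1 := hN₁ m hm
    have h2 : (0:ℝ) < (a m : ℝ) := by exact_mod_cast hapos m
    rw [le_div_iff₀ h2] at h1
    linarith
  obtain ⟨N₂, hN₂⟩ := exists_nat_ge (2*(k:ℝ) + 8/ρ + 6/((k:ℝ)*ρ))
  set N := max N₁ N₂ with hNdef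
  have hpos1 : (0:ℝ) < 8/ρ := by positivity
  have hpos2 : (0:ℝ) < 6/((k:ℝ)*ρ) := by positivity
  have hA : ∀ m, N ≤ m → 2*(k:ℝ) + 8/ρ + 6/((k:ℝ)*ρ) ≤ (a m : ℝ) := by
    intro m hm
    have hN2m : N₂ ≤ m := le_trans (le_max_right N₁ N₂) hm
    have hage := s12_age ha hapos m
    have h1 : N₂ ≤ a m := by omega
    calc 2*(k:ℝ) + 8/ρ + 6/((k:ℝ)*ρ) ≤ (N₂:ℝ) := hN₂
      _ ≤ (a m:ℝ) := by exact_mod_cast h1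
  have hF1 : ∀ m, N ≤ m → 2*((k:ℝ)-1) ≤ (a m : ℝ) := by
    intro m hm
    have := hA m hm
    linarith
  have hF2 : ∀ m, N ≤ m → 8 ≤ ρ * (a m : ℝ) := by
    intro m hm
    have h1 := hA m hm
    have h2 : 8/ρ ≤ (a m:ℝ) := by linarith
    calc (8:ℝ) = 8/ρ * ρ := by field_simp
      _ ≤ (a m:ℝ) * ρ := mul_le_mul_of_nonneg_right h2 hρ.le
      _ = ρ * a m := by ring
  have hkρ : (0:ℝ) < (k:ℝ)*ρ := mul_pos hk0 hρ
  have hF3 : ∀ m, N ≤ m → 6 ≤ (k:ℝ)*ρ * (a m : ℝ) := by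
    intro m hm
    have h1 := hA m hm
    have h2 : 6/((k:ℝ)*ρ) ≤ (a m:ℝ) := by linarith
    calc (6:ℝ) = 6/((k:ℝ)*ρ) * ((k:ℝ)*ρ) := by field_simp
      _ ≤ (a m:ℝ) * ((k:ℝ)*ρ) := mul_le_mul_of_nonneg_right h2 hkρ.le
      _ = (k:ℝ)*ρ * a m := by ring
  refine ⟨s12Q b a N, ?_⟩
  intro x y hx h
  have hbZ : (0:ℤ) < (b:ℤ) := by exact_mod_cast (by omega : 0 < b)
  have hQNpos : (0:ℤ) < s12Q b a N := pow_pos hbZ _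
  have hx0 : (0:ℤ) < x := lt_of_lt_of_le hQNpos hx
  have hx0r : (0:ℝ) < (x:ℝ) := by exact_mod_cast hx0
  have hxabs : |(x:ℝ)| = (x:ℝ) := abs_of_pos hx0r
  have hexp : -(k:ℝ)/((k:ℝ)-1) = -α := by rw [hα, neg_div]
  rw [hexp] at h
  -- choose the index n with Q n ≤ x < Q (n+1)
  have hex : ∃ m, x < s12Q b a m := by
    refine ⟨x.toNat, ?_⟩
    have h1 : x ≤ (x.toNat : ℤ) := Int.self_le_toNat x
    have h2 : (x.toNat:ℤ) < 2 ^ (x.toNat) := by exact_mod_cast Nat.lt_two_pow_self (n := x.toNat)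
    have h3 : (2:ℤ) ^ (x.toNat) ≤ (2:ℤ) ^ (a x.toNat) := pow_le_pow_right₀ (by norm_num)
      (le_trans (Nat.le_succ _) (s12_age ha hapos _))
    have h4 : (2:ℤ) ^ (a x.toNat) ≤ (b:ℤ) ^ (a x.toNat) :=
      pow_le_pow_left₀ (by norm_num) (by exact_mod_cast hb) _
    have : x < (b:ℤ)^(a x.toNat) := by linarith
    simpa [s12Q] using this
  have hQmono : ∀ {i j : ℕ}, i ≤ j → s12Q b a i ≤ s12Q b a j := by
    intro i j hij
    simp only [s12Q]
    exact pow_le_pow_right₀ (by exact_mod_cast (by omega : 1 ≤ b)) (ha.monotone hij)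
  obtain ⟨M, hm0, hmin⟩ : ∃ M, (x < s12Q b a M) ∧ ∀ m, m < M → ¬ x < s12Q b a m :=
    ⟨Nat.find hex, Nat.find_spec hex, fun m hm => Nat.find_min hex hm⟩
  have hNM : N < M := by
    by_contra hcon
    push_neg at hcon
    exact absurd hm0 (not_lt.mpr (le_trans (hQmono hcon) hx))
  obtain ⟨n, rfl⟩ : ∃ n, M = n + 1 := ⟨M - 1, by omega⟩
  have hnN : N ≤ n := by omega
  have hqx : s12Q b a n ≤ x := not_lt.mp (hmin n (by omega))
  have hQr : ∀ m, ((s12Q b a m : ℤ):ℝ) = (b:ℝ)^(a m) := fun m => by simp [s12Q]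
  have hqxr : (b:ℝ)^(a n) ≤ (x:ℝ) := by
    rw [← hQr n]; exact_mod_cast hqx
  have hm0r : (x:ℝ) < (b:ℝ)^(a (n+1)) := by
    rw [← hQr (n+1)]; exact_mod_cast hm0
  have hpn : (0:ℝ) < (b:ℝ)^(a n) := pow_pos hb0 _
  have hpn1 : (0:ℝ) < (b:ℝ)^(a (n+1)) := pow_pos hb0 _
  have hpn2 : (0:ℝ) < (b:ℝ)^(a (n+2)) := pow_pos hb0 _
  have hTub1 := s12T_ub hb ha hapos (n+1)
  by_cases hcase : (x:ℝ) * ((b:ℝ)^(a n) * s12T b a n) ≤ 1/2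
  · -- main case : x is a multiple of Q n
    have hx4 : 4 * (b:ℝ)^(a n) ≤ (x:ℝ)^α := by
      apply s12_xalpha hb2 hx0r (s := ((a n : ℕ):ℝ)) ?_ hαpos.le ?_
      · rw [Real.rpow_natCast]; exact hqxr
      · rw [hα, div_mul_eq_mul_div, le_div_iff₀ hkpos]
        have hf1 := hF1 n hnN
        nlinarith
    have hDb := s12_D hb ha hapos ζ hζ x y n
    rw [hxabs] at hDb
    have hq : (b:ℝ)^(a n) * (x:ℝ)^(-α) ≤ 1/4 := s12_quarter hx0r hpn hx4
    have h2 : (b:ℝ)^(a n) * |ζ*x - y| ≤ (b:ℝ)^(a n) * (x:ℝ)^(-α) :=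
      mul_le_mul_of_nonneg_left h hpn.le
    have hlt : |((x * s12P b a n - y * s12Q b a n : ℤ):ℝ)| < 1 := by linarith
    obtain ⟨c, hc1, hc2⟩ := s12_mult ha (by omega : 0 < b) (s12_zero hlt)
    exact ⟨n, c, hc1, hc2⟩
  · -- impossible case
    exfalso
    push_neg at hcase
    have hTub := s12T_ub hb ha hapos n
    have h1 : (x:ℝ) * ((b:ℝ)^(a n) * s12T b a n)
        ≤ ((x:ℝ) * (b:ℝ)^(a n)) * (2 * ((b:ℝ)^(a (n+1)))⁻¹) := by
      rw [mul_assoc]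
      apply mul_le_mul_of_nonneg_left ?_ hx0r.le
      calc (b:ℝ)^(a n) * s12T b a n ≤ (b:ℝ)^(a n) * (2 * ((b:ℝ)^(a (n+1)))⁻¹) :=
            mul_le_mul_of_nonneg_left hTub hpn.le
        _ = (b:ℝ)^(a n) * (2 * ((b:ℝ)^(a (n+1)))⁻¹) := rfl
    have h2 : (b:ℝ)^(a (n+1)) < 4 * ((x:ℝ) * (b:ℝ)^(a n)) := by
      have h3 : (1/2:ℝ) * (b:ℝ)^(a (n+1))
          < (((x:ℝ)*(b:ℝ)^(a n)) * (2 * ((b:ℝ)^(a (n+1)))⁻¹)) * (b:ℝ)^(a (n+1)) :=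
        mul_lt_mul_of_pos_right (lt_of_lt_of_le hcase h1) hpn1
      have h4 : (((x:ℝ)*(b:ℝ)^(a n)) * (2 * ((b:ℝ)^(a (n+1)))⁻¹)) * (b:ℝ)^(a (n+1))
          = 2 * ((x:ℝ)*(b:ℝ)^(a n)) := by
        field_simp
      rw [h4] at h3
      linarith
    have hs : (b:ℝ) ^ ((a (n+1):ℝ) - (a n:ℝ) - 2) ≤ (x:ℝ) := by
      have e1 : (a (n+1):ℝ) - (a n:ℝ) - 2 = (a (n+1):ℝ) - ((a n:ℝ) + 2) := by ring
      rw [e1, Real.rpow_sub hb0]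
      have e2 : (b:ℝ) ^ ((a (n+1):ℝ)) = (b:ℝ)^(a (n+1)) := Real.rpow_natCast _ _
      have e3 : (b:ℝ) ^ ((a n:ℝ) + 2) = (b:ℝ)^(a n) * (b:ℝ)^2 := by
        rw [show (a n:ℝ) + 2 = ((a n + 2 : ℕ):ℝ) by push_cast; ring,
          Real.rpow_natCast, pow_add]
      rw [e2, e3, div_le_iff₀ (by positivity)]
      have hxB : (0:ℝ) ≤ (x:ℝ)*(b:ℝ)^(a n) := by positivity
      have h5 : (4:ℝ) ≤ (b:ℝ)^2 := by nlinarith [hb2, sq_nonneg ((b:ℝ)-2)]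
      have h6 : ((x:ℝ)*(b:ℝ)^(a n)) * 4 ≤ ((x:ℝ)*(b:ℝ)^(a n)) * (b:ℝ)^2 :=
        mul_le_mul_of_nonneg_left h5 hxB
      nlinarith [h2, h6]
    have hx4' : 4 * (b:ℝ)^(a (n+1)) ≤ (x:ℝ)^α := by
      apply s12_xalpha hb2 hx0r hs hαpos.le
      rw [hα, div_mul_eq_mul_div, le_div_iff₀ hkpos]
      have hg := hG n (le_trans (le_max_left N₁ N₂) hnN)
      have hf2 := hF2 n hnN
      have h6 : (k:ℝ) * (a n:ℝ) + 4*(k:ℝ) ≤ (a (n+1):ℝ) := by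
        nlinarith [mul_nonneg hk0.le (by linarith : (0:ℝ) ≤ ρ*(a n:ℝ) - 8)]
      nlinarith
    have hq1 : (b:ℝ)^(a (n+1)) * (x:ℝ)^(-α) ≤ 1/4 := s12_quarter hx0r hpn1 hx4'
    have hnat : 2 * a (n+1) + 3 ≤ a (n+2) := by
      have hg1 := hG (n+1) (le_trans (le_max_left N₁ N₂) (le_trans hnN (Nat.le_succ n)))
      have hf3 := hF3 (n+1) (le_trans hnN (Nat.le_succ n))
      have han1 : (0:ℝ) ≤ (a (n+1):ℝ) := by positivity
      have : (2*(a (n+1):ℝ) + 3) ≤ (a (n+1+1):ℝ) := by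
        nlinarith [mul_nonneg (by linarith : (0:ℝ) ≤ (k:ℝ) - 2) han1]
      have := this
      exact_mod_cast (by push_cast; linarith : ((2 * a (n+1) + 3 : ℕ):ℝ) ≤ ((a (n+2) : ℕ):ℝ))
    have h7 : (x:ℝ) * ((b:ℝ)^(a (n+1)) * s12T b a (n+1)) ≤ 1/4 := by
      have hTpos1 := s12T_pos hb ha hapos (n+1)
      have h8 : (x:ℝ) * ((b:ℝ)^(a (n+1)) * s12T b a (n+1))
          ≤ (b:ℝ)^(a (n+1)) * ((b:ℝ)^(a (n+1)) * (2 * ((b:ℝ)^(a (n+2)))⁻¹)) := by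
        apply mul_le_mul hm0r.le (mul_le_mul_of_nonneg_left hTub1 hpn1.le)
          (mul_pos hpn1 hTpos1).le hpn1.le
      have h10 : 8 * ((b:ℝ)^(a (n+1)) * (b:ℝ)^(a (n+1))) ≤ (b:ℝ)^(a (n+2)) := by
        have h11 : (8:ℝ) ≤ (b:ℝ)^3 := by
          have := pow_le_pow_left₀ (by norm_num : (0:ℝ) ≤ 2) hb2 3
          norm_num at this
          linarith
        calc 8 * ((b:ℝ)^(a (n+1)) * (b:ℝ)^(a (n+1)))
            ≤ (b:ℝ)^3 * ((b:ℝ)^(a (n+1)) * (b:ℝ)^(a (n+1))) :=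
              mul_le_mul_of_nonneg_right h11 (by positivity)
          _ = (b:ℝ) ^ (2 * a (n+1) + 3) := by
              rw [pow_add, pow_mul]
              ring
          _ ≤ (b:ℝ) ^ (a (n+2)) := pow_le_pow_right₀ (by linarith) hnat
      have h12 : ((b:ℝ)^(a (n+2)))⁻¹ ≤ (8 * ((b:ℝ)^(a (n+1)) * (b:ℝ)^(a (n+1))))⁻¹ :=
        inv_anti₀ (by positivity) h10
      have h13 : (b:ℝ)^(a (n+1)) * ((b:ℝ)^(a (n+1)) * (2 * ((b:ℝ)^(a (n+2)))⁻¹))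
          = 2 * ((b:ℝ)^(a (n+1)) * (b:ℝ)^(a (n+1))) * ((b:ℝ)^(a (n+2)))⁻¹ := by ring
      have h14 : 2 * ((b:ℝ)^(a (n+1)) * (b:ℝ)^(a (n+1))) * ((b:ℝ)^(a (n+2)))⁻¹
          ≤ 2 * ((b:ℝ)^(a (n+1)) * (b:ℝ)^(a (n+1)))
            * (8 * ((b:ℝ)^(a (n+1)) * (b:ℝ)^(a (n+1))))⁻¹ :=
        mul_le_mul_of_nonneg_left h12 (by positivity)
      have h15 : 2 * ((b:ℝ)^(a (n+1)) * (b:ℝ)^(a (n+1)))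
          * (8 * ((b:ℝ)^(a (n+1)) * (b:ℝ)^(a (n+1))))⁻¹ = 1/4 := by
        field_simp
        ring
      linarith [h8, h13 ▸ (h15 ▸ h14)]
    have hDb := s12_D hb ha hapos ζ hζ x y (n+1)
    rw [hxabs] at hDb
    have h16 : (b:ℝ)^(a (n+1)) * |ζ*x - y| ≤ (b:ℝ)^(a (n+1)) * (x:ℝ)^(-α) :=
      mul_le_mul_of_nonneg_left h hpn1.le
    have hlt : |((x * s12P b a (n+1) - y * s12Q b a (n+1) : ℤ):ℝ)| < 1 := by linarith
    obtain ⟨c, hc1, _⟩ := s12_mult ha (by omega : 0 < b) (s12_zero hlt)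
    have hdvd : s12Q b a (n+1) ∣ x := ⟨c, by rw [hc1, s12Q]; ring⟩
    exact absurd hm0 (not_lt.mpr (Int.le_of_dvd hx0 hdvd))
end

section
/- An irrational real number ζ satisfies λ_1(ζ) = ∞ (i.e., is a Liouville number) if and only if for every positive integer k there exists a positive integer x with max_{1≤j≤k} ‖ζ^j x‖ < C_0(k, ζ)·x^{−1}, where C_0(k, ζ) = (1/2)·k^{−1}·(1+|ζ|)^{1−k}. -/
lemma dNI_nonneg (a : ℝ) : 0 ≤ distNearestInt a := abs_nonneg _
lemma dNI_le_half (a : ℝ) : distNearestInt a ≤ 1/2 := abs_sub_round a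
lemma dNI_le (a : ℝ) (m : ℤ) : distNearestInt a ≤ |a - m| := round_le a m

lemma dNI_pos_of_irrational {ζ : ℝ} (hirr : Irrational ζ) {b : ℕ} (hb : 0 < b) :
    0 < distNearestInt (ζ * b) := by
  rw [distNearestInt, abs_pos, sub_ne_zero]
  intro h
  have hb' : (b : ℝ) ≠ 0 := Nat.cast_ne_zero.2 hb.ne'
  refine hirr ⟨(round (ζ * (b:ℝ)) : ℚ) / (b : ℚ), ?_⟩
  push_cast
  rw [div_eq_iff hb']
  exact h.symm

lemma maxDist_le {k : ℕ} {ζ : ℝ} {x : ℕ} {c : ℝ} (hc : 0 ≤ c)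
    (h : ∀ j ∈ Finset.Icc 1 k, distNearestInt (ζ ^ j * x) ≤ c) : maxDist k ζ x ≤ c := by
  refine Real.iSup_le (fun j => Real.iSup_le (fun hj => h j hj) hc) hc

lemma le_maxDist {k : ℕ} {ζ : ℝ} {x : ℕ} {j : ℕ} (hj : j ∈ Finset.Icc 1 k) :
    distNearestInt (ζ ^ j * x) ≤ maxDist k ζ x := by
  have hb : BddAbove (Set.range fun j => ⨆ _ : j ∈ Finset.Icc 1 k, distNearestInt (ζ ^ j * x)) := by
    refine ⟨1/2, Set.forall_mem_range.2 fun j => Real.iSup_le (fun _ => dNI_le_half _) (by norm_num)⟩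
  have h1 : distNearestInt (ζ ^ j * x) ≤ ⨆ _ : j ∈ Finset.Icc 1 k, distNearestInt (ζ ^ j * x) := by
    rw [ciSup_pos hj]
  exact h1.trans (le_ciSup hb j)

lemma pow_diff_bound (a b M : ℝ) (hM : 0 ≤ M) (ha : |a| ≤ M) (hb : |b| ≤ M) :
    ∀ n : ℕ, |a ^ n - b ^ n| ≤ n * M ^ (n - 1) * |a - b| := by
  intro n
  induction n with
  | zero => simp
  | succ n ih =>
    have key : a ^ (n+1) - b ^ (n+1) = a * (a ^ n - b ^ n) + b ^ n * (a - b) := by ring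
    have h1 : |a ^ (n+1) - b ^ (n+1)| ≤ |a| * |a ^ n - b ^ n| + |b| ^ n * |a - b| := by
      rw [key]
      calc |a * (a ^ n - b ^ n) + b ^ n * (a - b)| ≤ |a * (a ^ n - b ^ n)| + |b ^ n * (a - b)| :=
            abs_add_le _ _
        _ = |a| * |a ^ n - b ^ n| + |b| ^ n * |a - b| := by rw [abs_mul, abs_mul, abs_pow]
    have h2 : |a| * |a ^ n - b ^ n| ≤ M * (n * M ^ (n-1) * |a - b|) :=
      mul_le_mul ha ih (abs_nonneg _) hM
    have h3 : |b| ^ n * |a - b| ≤ M ^ n * |a - b| :=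
      mul_le_mul_of_nonneg_right (pow_le_pow_left₀ (abs_nonneg _) hb n) (abs_nonneg _)
    have h4 : M * (↑n * M ^ (n-1) * |a - b|) ≤ (n : ℝ) * M ^ n * |a - b| := by
      rcases Nat.eq_zero_or_pos n with h | h
      · subst h; simp
      · have hMM : M * M ^ (n - 1) = M ^ n := by
          rw [← pow_succ']; congr 1; omega
        rw [show M * (↑n * M ^ (n-1) * |a - b|) = ↑n * (M * M ^ (n-1)) * |a - b| from by ring,
          hMM]
    calc |a ^ (n+1) - b ^ (n+1)| ≤ |a| * |a ^ n - b ^ n| + |b| ^ n * |a - b| := h1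
      _ ≤ n * M ^ n * |a - b| + M ^ n * |a - b| := add_le_add (h2.trans h4) h3
      _ = (↑(n + 1) : ℝ) * M ^ (n + 1 - 1) * |a - b| := by push_cast; ring

lemma one_add_pow_ge (t : ℝ) (ht : 0 ≤ t) : ∀ j : ℕ, 1 ≤ j → 1 + t ^ j ≤ (1 + t) ^ j := by
  intro j hj
  induction j with
  | zero => omega
  | succ n ih =>
    rcases Nat.eq_zero_or_pos n with h | h
    · subst h; simp
    · have h1 := ih h
      have e1 : (1 + t) ^ (n + 1) = (1 + t) ^ n * (1 + t) := pow_succ _ _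
      have e2 : t ^ (n + 1) = t ^ n * t := pow_succ _ _
      nlinarith [pow_nonneg ht n]

/-- zpow identity for the constant. -/
lemma C0_eq {t : ℝ} (ht : 0 ≤ t) {k : ℕ} (hk : 1 ≤ k) :
    (1 + t) ^ (1 - (k : ℤ)) = ((1 + t) ^ (k - 1 : ℕ))⁻¹ := by
  have h : (1 : ℤ) - k = -((k - 1 : ℕ) : ℤ) := by omega
  rw [h, zpow_neg, zpow_natCast]

set_option maxHeartbeats 2000000 in
/-- Core of the reverse direction. -/
lemma reverse_core (ζ : ℝ) (hirr : Irrational ζ)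
    (H : ∀ k : ℕ, 0 < k → ∃ x : ℕ, 0 < x ∧
      maxDist k ζ x < (1 / 2 * (k : ℝ)⁻¹ * (1 + |ζ|) ^ (1 - (k : ℤ))) * (x : ℝ)⁻¹)
    (η : ℝ) :
    {x : ℕ | 0 < x ∧ 0 < maxDist 1 ζ x ∧ maxDist 1 ζ x ≤ (x : ℝ) ^ (-η)}.Infinite := by
  set t := |ζ| with ht_def
  have ht : 0 ≤ t := abs_nonneg _
  apply Set.infinite_of_forall_exists_gt
  intro N
  -- a positive lower bound for ‖ζ b‖ over 1 ≤ b ≤ N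
  set ε : ℝ := if h : (Finset.Icc 1 N).Nonempty
    then (Finset.Icc 1 N).inf' h (fun b => distNearestInt (ζ * b)) else 1 with hε_def
  have hε : 0 < ε := by
    rw [hε_def]
    split_ifs with h
    · obtain ⟨b, hb, hbe⟩ := Finset.exists_mem_eq_inf' h (fun b => distNearestInt (ζ * b))
      rw [hbe]
      exact dNI_pos_of_irrational hirr (by simp [Finset.mem_Icc] at hb; omega)
    · norm_num
  have hεle : ∀ b ∈ Finset.Icc 1 N, ε ≤ distNearestInt (ζ * b) := by
    intro b hb
    rw [hε_def, dif_pos ⟨b, hb⟩]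
    exact Finset.inf'_le _ hb
  clear_value ε
  -- choose k
  obtain ⟨k, hk⟩ := exists_nat_gt (max (1 / (2 * ε)) ((η + 1) / 2))
  have hk1 : 1 ≤ k := by
    by_contra h
    have : k = 0 := by omega
    subst this
    simp only [Nat.cast_zero] at hk
    have := lt_of_le_of_lt (le_max_left _ _) hk
    have : 0 < 1 / (2 * ε) := by positivity
    linarith
  have hkR : (1 : ℝ) ≤ (k : ℝ) := by exact_mod_cast hk1
  have hkε : 1 / (2 * (k : ℝ)) < ε := by
    have h1 : 1 / (2 * ε) < (k : ℝ) := lt_of_le_of_lt (le_max_left _ _) hk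
    rw [div_lt_iff₀ (by positivity)] at h1
    rw [div_lt_iff₀ (by positivity)]
    nlinarith
  have hkη : η < 2 * (k : ℝ) - 1 := by
    have h1 : (η + 1) / 2 < (k : ℝ) := lt_of_le_of_lt (le_max_right _ _) hk
    linarith
  -- apply the hypothesis
  obtain ⟨x, hx0, hmax⟩ := H k (by omega)
  set P : ℝ := (1 + t) ^ (k - 1 : ℕ) with hP_def
  have hP1 : 1 ≤ P := one_le_pow₀ (by linarith)
  have hP0 : 0 < P := by linarith
  set C0 : ℝ := 1 / (2 * (k : ℝ) * P) with hC0P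
  have hmax' : maxDist k ζ x < C0 * (x : ℝ)⁻¹ := by
    have : 1 / 2 * (k : ℝ)⁻¹ * (1 + t) ^ (1 - (k : ℤ)) = C0 := by
      rw [hC0P, C0_eq ht hk1, ← hP_def]
      field_simp
    rw [← this]
    exact hmax
  clear hmax
  clear_value P
  clear_value C0
  have hC0pos : 0 < C0 := by rw [hC0P]; positivity
  have hC0half : C0 ≤ 1 / (2 * k) := by
    rw [hC0P]
    apply div_le_div_of_nonneg_left one_pos.le (by positivity)
    nlinarith
  have hC0le1 : C0 ≤ 1 := by
    have : (1:ℝ) / (2 * k) ≤ 1 := by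
      rw [div_le_one (by positivity)]; linarith
    linarith
  have hxR : (1 : ℝ) ≤ (x : ℝ) := by exact_mod_cast hx0
  have hxRpos : (0 : ℝ) < (x : ℝ) := by linarith
  -- rounds
  set r : ℕ → ℤ := fun j => round (ζ ^ j * (x : ℝ)) with hr_def
  have hδ : ∀ j, 1 ≤ j → j ≤ k → |ζ ^ j * (x:ℝ) - r j| < C0 * (x:ℝ)⁻¹ := by
    intro j h1 h2
    have := le_maxDist (k := k) (ζ := ζ) (x := x) (j := j) (by simp [Finset.mem_Icc]; omega)
    have h3 : distNearestInt (ζ ^ j * x) < C0 * (x:ℝ)⁻¹ := lt_of_le_of_lt this hmax'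
    simpa [distNearestInt, hr_def] using h3
  -- Claim A
  have claimA : ∀ j : ℕ, 1 ≤ j → j < k → (x : ℤ) * r (j + 1) = r 1 * r j := by
    intro j hj1 hjk
    have hδ1 : |ζ ^ 1 * (x:ℝ) - r 1| < C0 * (x:ℝ)⁻¹ := hδ 1 le_rfl hk1
    have hδj : |ζ ^ j * (x:ℝ) - r j| < C0 * (x:ℝ)⁻¹ := hδ j hj1 (by omega)
    have hδj1 : |ζ ^ (j+1) * (x:ℝ) - r (j+1)| < C0 * (x:ℝ)⁻¹ := hδ (j+1) (by omega) (by omega)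
    have hrj : |(r j : ℝ)| ≤ t ^ j * x + 1 / 2 := by
      have h1 : |(r j : ℝ)| - |ζ ^ j * (x:ℝ)| ≤ |(r j : ℝ) - ζ ^ j * x| := abs_sub_abs_le_abs_sub _ _
      have h2 : |(r j : ℝ) - ζ ^ j * x| ≤ 1/2 := by
        rw [abs_sub_comm]; exact abs_sub_round _
      have h3 : |ζ ^ j * (x:ℝ)| = t ^ j * x := by
        rw [abs_mul, abs_pow, Nat.abs_cast]
      linarith
    have h2P : 3/2 + t + t ^ j ≤ 2 * P := by
      have hb1 : 1 + t ^ j ≤ (1 + t) ^ j := one_add_pow_ge t ht j hj1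
      have hb2 : (1 + t) ≤ (1 + t) ^ j := by
        have := pow_le_pow_right₀ (by linarith : (1:ℝ) ≤ 1 + t) hj1
        simpa using this
      have hb3 : (1 + t) ^ j ≤ P := by
        rw [hP_def]
        exact pow_le_pow_right₀ (by linarith) (by omega)
      linarith
    have key : ((x : ℤ) * r (j + 1) - r 1 * r j : ℤ) = 0 := by
      have habs : |(((x : ℤ) * r (j + 1) - r 1 * r j : ℤ) : ℝ)| < 1 := by
        have iden : (((x : ℤ) * r (j + 1) - r 1 * r j : ℤ) : ℝ)
            = (x:ℝ) * ((r (j+1) : ℝ) - ζ ^ (j+1) * x)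
              + (ζ * x) * (ζ ^ j * x - r j) + (r j : ℝ) * (ζ ^ 1 * x - r 1) := by
          push_cast
          ring
        rw [iden]
        have e1 : |(x:ℝ) * ((r (j+1) : ℝ) - ζ ^ (j+1) * x)| = (x:ℝ) * |ζ ^ (j+1) * x - r (j+1)| := by
          rw [abs_mul, Nat.abs_cast, abs_sub_comm]
        have e2 : |(ζ * x) * (ζ ^ j * x - r j)| = (t * x) * |ζ ^ j * x - r j| := by
          rw [abs_mul, abs_mul, Nat.abs_cast, ht_def]
        have e3 : |(r j : ℝ) * (ζ ^ 1 * x - r 1)| = |(r j : ℝ)| * |ζ ^ 1 * x - r 1| := abs_mul _ _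
        have habs3 := abs_add_three ((x:ℝ) * ((r (j+1) : ℝ) - ζ ^ (j+1) * x))
          ((ζ * x) * (ζ ^ j * x - r j)) ((r j : ℝ) * (ζ ^ 1 * x - r 1))
        rw [e1, e2, e3] at habs3
        have hb1 : (x:ℝ) * |ζ ^ (j+1) * x - r (j+1)| < (x:ℝ) * (C0 * (x:ℝ)⁻¹) :=
          mul_lt_mul_of_pos_left hδj1 hxRpos
        have hb2 : (t * x) * |ζ ^ j * x - r j| ≤ (t * x) * (C0 * (x:ℝ)⁻¹) :=
          mul_le_mul_of_nonneg_left hδj.le (by positivity)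
        have hb3 : |(r j : ℝ)| * |ζ ^ 1 * x - r 1| ≤ (t ^ j * x + 1/2) * (C0 * (x:ℝ)⁻¹) :=
          mul_le_mul hrj hδ1.le (abs_nonneg _) (by positivity)
        have hxinv : (x:ℝ) * (C0 * (x:ℝ)⁻¹) = C0 := by field_simp
        have hb2' : (t * x) * (C0 * (x:ℝ)⁻¹) = t * C0 := by field_simp
        have hb3' : (t ^ j * x + 1/2) * (C0 * (x:ℝ)⁻¹) ≤ t ^ j * C0 + C0 / 2 := by
          rw [add_mul]
          have : t ^ j * (x:ℝ) * (C0 * (x:ℝ)⁻¹) = t ^ j * C0 := by field_simp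
          rw [this]
          have hinv : (x:ℝ)⁻¹ ≤ 1 := by
            rw [inv_le_one_iff₀]; right; exact hxR
          have hCx : C0 * (x:ℝ)⁻¹ ≤ C0 := mul_le_of_le_one_right hC0pos.le hinv
          linarith
        have hsum : C0 + t * C0 + (t ^ j * C0 + C0 / 2) ≤ 1 := by
          have hCP : C0 * (2 * P) ≤ 1 := by
            rw [hC0P, div_mul_eq_mul_div, div_le_one (by positivity)]
            have := mul_le_mul_of_nonneg_right hkR hP0.le
            linarith
          have := mul_le_mul_of_nonneg_left h2P hC0pos.le
          linarith
        rw [hxinv] at hb1; rw [hb2'] at hb2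
        have hb3'' := hb3.trans hb3'
        linarith
      have h9 : |((x : ℤ) * r (j + 1) - r 1 * r j : ℤ)| < 1 := by exact_mod_cast habs
      rw [abs_lt] at h9
      omega
    omega
  -- Claim B
  have claimB : ∀ j : ℕ, 1 ≤ j → j ≤ k → r j * (x : ℤ) ^ (j - 1) = (r 1) ^ j := by
    intro j
    induction j with
    | zero => omega
    | succ n ih =>
      intro _ hk'
      rcases Nat.eq_zero_or_pos n with h | h
      · subst h; simp
      · have hB := ih h (by omega)
        have hA := claimA n h (by omega)
        have e : (x:ℤ) ^ n = (x:ℤ) * (x:ℤ) ^ (n - 1) := by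
          conv_lhs => rw [show n = (n-1)+1 by omega]
          rw [pow_succ']
        calc r (n+1) * (x:ℤ) ^ ((n+1) - 1) = r (n+1) * (x:ℤ) ^ n := by norm_num
          _ = ((x:ℤ) * r (n+1)) * (x:ℤ) ^ (n-1) := by rw [e]; ring
          _ = (r 1 * r n) * (x:ℤ) ^ (n-1) := by rw [hA]
          _ = r 1 * (r n * (x:ℤ) ^ (n-1)) := by ring
          _ = r 1 * (r 1) ^ n := by rw [hB]
          _ = (r 1) ^ (n+1) := by ring
  clear_value r
  -- gcd decomposition
  have hxZ : (x : ℤ) ≠ 0 := by exact_mod_cast hx0.ne'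
  set d : ℤ := (Int.gcd (r 1) (x : ℤ) : ℤ) with hd_def
  have hgcdpos : 0 < Int.gcd (r 1) (x : ℤ) := Int.gcd_pos_iff.mpr (Or.inr hxZ)
  have hd0 : 0 < d := by rw [hd_def]; exact_mod_cast hgcdpos
  have hdp : d ∣ r 1 := Int.gcd_dvd_left _ _
  have hdx : d ∣ (x : ℤ) := Int.gcd_dvd_right _ _
  set A : ℤ := r 1 / d with hA_def
  set B : ℤ := (x : ℤ) / d with hB_def
  have hpA : d * A = r 1 := Int.mul_ediv_cancel' hdp
  have hxB : d * B = (x : ℤ) := Int.mul_ediv_cancel' hdx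
  have cop : Int.gcd A B = 1 := Int.gcd_div_gcd_div_gcd hgcdpos
  clear_value A B
  clear_value d
  have hdvd : (x : ℤ) ^ (k - 1) ∣ (r 1) ^ k :=
    ⟨r k, by rw [← claimB k hk1 le_rfl]; ring⟩
  have hB0 : 0 < B := by
    rcases lt_trichotomy B 0 with h | h | h
    · nlinarith [hxB, hd0, hx0, (by exact_mod_cast hx0 : (0:ℤ) < (x:ℤ))]
    · rw [h, mul_zero] at hxB; exact absurd hxB.symm hxZ
    · exact h
  have hBd : B ^ (k - 1) ∣ d := by
    have h1 : (d * B) ^ (k - 1) ∣ (d * A) ^ k := by rw [hxB, hpA]; exact hdvd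
    rw [mul_pow, mul_pow] at h1
    have hdk : d ^ k = d ^ (k - 1) * d := by
      conv_lhs => rw [show k = (k-1)+1 by omega]
      rw [pow_succ]
    rw [hdk] at h1
    have h1' : d ^ (k-1) * B ^ (k-1) ∣ d ^ (k-1) * (d * A ^ k) := by
      have e : d ^ (k-1) * (d * A ^ k) = d ^ (k-1) * d * A ^ k := by ring
      rw [e]; exact h1
    have h2 : B ^ (k - 1) ∣ d * A ^ k :=
      (mul_dvd_mul_iff_left (pow_ne_zero (k-1) hd0.ne')).mp h1'
    have copBA : IsCoprime (B ^ (k - 1)) (A ^ k) :=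
      ((Int.isCoprime_iff_gcd_eq_one.mpr cop).symm).pow
    exact copBA.dvd_of_dvd_mul_right h2
  have hBd' : B ^ (k - 1) ≤ d := Int.le_of_dvd hd0 hBd
  have hxBk : B ^ k ≤ (x : ℤ) := by
    have : B ^ k = B ^ (k - 1) * B := by
      conv_lhs => rw [show k = (k-1)+1 by omega]
      rw [pow_succ]
    rw [this, ← hxB]
    exact mul_le_mul_of_nonneg_right hBd' hB0.le
  -- pass to the reduced fraction A / B
  set b : ℕ := B.toNat with hb_def
  have hbB : (b : ℤ) = B := Int.toNat_of_nonneg hB0.le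
  have hb0 : 0 < b := by omega
  clear_value b
  have hbR : ((b : ℕ) : ℝ) = ((B : ℤ) : ℝ) := by exact_mod_cast congrArg (fun z : ℤ => (z : ℝ)) hbB
  have hdR : (0:ℝ) < (d : ℝ) := by exact_mod_cast hd0
  have hBRpos : (0:ℝ) < ((B : ℤ) : ℝ) := by exact_mod_cast hB0
  have hbR1 : (1:ℝ) ≤ ((b:ℕ) : ℝ) := by exact_mod_cast hb0
  have hδ1' : |ζ * (x:ℝ) - (r 1 : ℝ)| < C0 * (x:ℝ)⁻¹ := by
    have := hδ 1 le_rfl hk1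
    rwa [pow_one] at this
  have hxBR : (d:ℝ) * (B:ℝ) = (x:ℝ) := by exact_mod_cast hxB
  have hpAR : (d:ℝ) * (A:ℝ) = ((r 1 : ℤ):ℝ) := by exact_mod_cast hpA
  have habA : |ζ * ((b:ℕ):ℝ) - ((A : ℤ):ℝ)| = |ζ * (x:ℝ) - ((r 1 : ℤ):ℝ)| / (d:ℝ) := by
    have hfrac : ζ * ((B : ℤ):ℝ) - ((A : ℤ):ℝ) = (ζ * (x:ℝ) - ((r 1 : ℤ):ℝ)) / (d:ℝ) := by
      rw [← hxBR, ← hpAR]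
      field_simp
    rw [hbR, hfrac, abs_div, abs_of_pos hdR]
  set m : ℕ := 2 * k - 1 with hm_def
  clear_value m
  have hmR : ((m : ℕ) : ℝ) = 2 * (k:ℝ) - 1 := by
    have h : (m : ℕ) + 1 = 2 * k := by omega
    have h' : ((m:ℕ):ℝ) + 1 = 2 * (k:ℝ) := by exact_mod_cast h
    linarith
  have hxRk : ((B:ℤ):ℝ) ^ k ≤ (x:ℝ) := by exact_mod_cast hxBk
  have hdRk : ((B:ℤ):ℝ) ^ (k-1) ≤ (d:ℝ) := by exact_mod_cast hBd'
  have hmul : ((B:ℤ):ℝ) ^ m ≤ (x:ℝ) * (d:ℝ) := by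
    rw [show m = k + (k-1) by omega, pow_add]
    exact mul_le_mul hxRk hdRk (by positivity) (by linarith)
  have hBm0 : (0:ℝ) < ((B:ℤ):ℝ) ^ m := by positivity
  -- the key smallness bound
  have hkey : distNearestInt (ζ * ((b:ℕ):ℝ)) < C0 / ((B:ℤ):ℝ) ^ m := by
    calc distNearestInt (ζ * ((b:ℕ):ℝ)) ≤ |ζ * ((b:ℕ):ℝ) - ((A : ℤ):ℝ)| := dNI_le _ A
      _ = |ζ * (x:ℝ) - ((r 1 : ℤ):ℝ)| / (d:ℝ) := habA
      _ < (C0 * (x:ℝ)⁻¹) / (d:ℝ) := by gcongr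
      _ = C0 / ((x:ℝ) * (d:ℝ)) := by field_simp
      _ ≤ C0 / ((B:ℤ):ℝ) ^ m := by gcongr
  have hkeyC0 : distNearestInt (ζ * ((b:ℕ):ℝ)) < C0 := by
    have h1 : C0 / ((B:ℤ):ℝ) ^ m ≤ C0 := by
      apply div_le_self hC0pos.le
      exact one_le_pow₀ (by exact_mod_cast hB0)
    linarith
  have hkeyη : distNearestInt (ζ * ((b:ℕ):ℝ)) ≤ ((b:ℕ):ℝ) ^ (-η) := by
    have h1 : C0 / ((B:ℤ):ℝ) ^ m ≤ 1 / ((B:ℤ):ℝ) ^ m := by gcongr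
    have h2 : (1:ℝ) / ((B:ℤ):ℝ) ^ m = ((b:ℕ):ℝ) ^ (-(m:ℝ)) := by
      rw [Real.rpow_neg (by positivity), Real.rpow_natCast, one_div, hbR]
    have h3 : ((b:ℕ):ℝ) ^ (-(m:ℝ)) ≤ ((b:ℕ):ℝ) ^ (-η) := by
      apply Real.rpow_le_rpow_of_exponent_le hbR1
      rw [hmR]; linarith
    have h4 : C0 / ((B:ℤ):ℝ) ^ m ≤ ((b:ℕ):ℝ) ^ (-(m:ℝ)) := by rw [← h2]; exact h1
    linarith [hkey, h4, h3]
  -- b is bigger than N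
  have hbN : N < b := by
    by_contra hc
    push_neg at hc
    have hmem : b ∈ Finset.Icc 1 N := by simp [Finset.mem_Icc]; omega
    have h1 : ε ≤ distNearestInt (ζ * ((b:ℕ):ℝ)) := hεle b hmem
    have h2 : C0 ≤ 1 / (2 * (k:ℝ)) := hC0half
    linarith
  refine ⟨b, ⟨hb0, ?_, ?_⟩, hbN⟩
  · have h11 : (1:ℕ) ∈ Finset.Icc 1 1 := by simp
    have h1 := le_maxDist (k := 1) (ζ := ζ) (x := b) h11
    rw [pow_one] at h1
    exact lt_of_lt_of_le (dNI_pos_of_irrational hirr hb0) h1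
  · apply maxDist_le (Real.rpow_nonneg (by positivity) _)
    intro j hj
    have : j = 1 := by simp [Finset.mem_Icc] at hj; omega
    subst this
    rw [pow_one]
    exact hkeyη


set_option maxHeartbeats 2000000 in
lemma forward_core (ζ : ℝ) (k : ℕ) (hk : 0 < k) (η : ℝ) (hη : 2 * (k:ℝ) < η)
    (hinf : {x : ℕ | 0 < x ∧ 0 < maxDist 1 ζ x ∧ maxDist 1 ζ x ≤ (x : ℝ) ^ (-η)}.Infinite) :
    ∃ x : ℕ, 0 < x ∧
      maxDist k ζ x < (1 / 2 * (k : ℝ)⁻¹ * (1 + |ζ|) ^ (1 - (k : ℤ))) * (x : ℝ)⁻¹ := by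
  set t := |ζ| with ht_def
  have ht : 0 ≤ t := abs_nonneg _
  have hk1 : 1 ≤ k := hk
  have hkR : (1:ℝ) ≤ (k:ℝ) := by exact_mod_cast hk1
  set P : ℝ := (1 + t) ^ (k - 1 : ℕ) with hP_def
  have hP1 : 1 ≤ P := one_le_pow₀ (by linarith)
  have hP0 : 0 < P := by linarith
  obtain ⟨N, hN⟩ := exists_nat_gt (2 * (k:ℝ)^2 * P^2)
  obtain ⟨x, hxS, hxN⟩ := hinf.exists_gt N
  obtain ⟨hx0, hpos, hsmall⟩ := hxS
  set X : ℝ := (x : ℝ) with hX_def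
  have hXN : (N:ℝ) < X := by rw [hX_def]; exact_mod_cast hxN
  have hxbig : 2 * (k:ℝ)^2 * P^2 < X := lt_trans hN hXN
  have hX1 : (1:ℝ) ≤ X := by
    rw [hX_def]; exact_mod_cast hx0
  have hX0 : (0:ℝ) < X := by linarith
  set p : ℤ := round (ζ * X) with hp_def
  set δ : ℝ := distNearestInt (ζ * X) with hδ_def
  have hδ0 : 0 ≤ δ := dNI_nonneg _
  have hδp : δ = |ζ * X - p| := rfl
  have hδη : δ ≤ X ^ (-η) := by
    have h1 := le_maxDist (k := 1) (ζ := ζ) (x := x) (j := 1) (by simp)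
    rw [pow_one] at h1
    exact le_trans h1 hsmall
  have hδ2k : δ ≤ (X ^ (2*k : ℕ))⁻¹ := by
    have h1 : X ^ (-η) ≤ X ^ (-(((2*k : ℕ) : ℝ))) := by
      apply Real.rpow_le_rpow_of_exponent_le hX1
      push_cast
      linarith
    have h2 : X ^ (-(((2*k : ℕ) : ℝ))) = (X ^ (2*k : ℕ))⁻¹ := by
      rw [Real.rpow_neg hX0.le, Real.rpow_natCast]
    linarith [hδη, h1, h2.le]
  refine ⟨x ^ k, pow_pos hx0 k, ?_⟩
  have hcast : ((x ^ k : ℕ) : ℝ) = X ^ k := by push_cast; rfl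
  -- bound each term
  have hM : |ζ * X| ≤ (1 + t) * X ∧ |(p:ℝ)| ≤ (1 + t) * X := by
    constructor
    · rw [abs_mul, abs_of_pos hX0, ← ht_def]
      nlinarith
    · have h1 : |(p:ℝ)| - |ζ * X| ≤ |(p:ℝ) - ζ * X| := abs_sub_abs_le_abs_sub _ _
      have h2 : |(p:ℝ) - ζ * X| ≤ 1/2 := by rw [abs_sub_comm, hp_def]; exact abs_sub_round _
      have h3 : |ζ * X| = t * X := by rw [abs_mul, abs_of_pos hX0, ← ht_def]
      nlinarith
  have hbound : ∀ j ∈ Finset.Icc 1 k,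
      distNearestInt (ζ ^ j * ((x ^ k : ℕ) : ℝ)) ≤ (k:ℝ) * P * X ^ (k-1 : ℕ) * δ := by
    intro j hj
    simp only [Finset.mem_Icc] at hj
    obtain ⟨hj1, hjk⟩ := hj
    have ex : X ^ j * X ^ (k - j) = X ^ k := by rw [← pow_add]; congr 1; omega
    have e : ζ ^ j * X ^ k - ((p:ℝ) ^ j * X ^ (k - j))
        = ((ζ * X) ^ j - (p:ℝ) ^ j) * X ^ (k - j) := by
      rw [← ex, mul_pow]; ring
    have step1 : distNearestInt (ζ ^ j * ((x ^ k : ℕ) : ℝ))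
        ≤ |(ζ * X) ^ j - (p:ℝ) ^ j| * X ^ (k - j) := by
      have h1 := dNI_le (ζ ^ j * ((x ^ k : ℕ) : ℝ)) (p ^ j * (x : ℤ) ^ (k - j))
      have h2 : ((p ^ j * (x : ℤ) ^ (k - j) : ℤ) : ℝ) = (p:ℝ) ^ j * X ^ (k - j) := by
        push_cast; rfl
      rw [hcast, h2, e, abs_mul, abs_of_nonneg (by positivity : (0:ℝ) ≤ X ^ (k-j))] at h1
      rwa [hcast]
    have step2 : |(ζ * X) ^ j - (p:ℝ) ^ j| ≤ j * ((1+t) * X) ^ (j-1) * δ := by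
      rw [hδp]
      exact pow_diff_bound (ζ * X) (p:ℝ) ((1+t)*X) (by positivity) hM.1 hM.2 j
    have m1 : ((1+t) * X) ^ (j-1) = (1+t) ^ (j-1) * X ^ (j-1) := mul_pow _ _ _
    have m2 : (1+t) ^ (j-1 : ℕ) ≤ P := by
      rw [hP_def]; exact pow_le_pow_right₀ (by linarith) (by omega)
    have m3 : X ^ (j-1 : ℕ) * X ^ (k-j : ℕ) = X ^ (k-1 : ℕ) := by
      rw [← pow_add]; congr 1; omega
    have hjkR : (j:ℝ) ≤ (k:ℝ) := by exact_mod_cast hjk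
    calc distNearestInt (ζ ^ j * ((x ^ k : ℕ) : ℝ))
        ≤ |(ζ * X) ^ j - (p:ℝ) ^ j| * X ^ (k - j) := step1
      _ ≤ (j * ((1+t) * X) ^ (j-1) * δ) * X ^ (k - j) := by
          apply mul_le_mul_of_nonneg_right step2 (by positivity)
      _ = ((j:ℝ) * (1+t) ^ (j-1)) * (X ^ (j-1) * X ^ (k-j)) * δ := by rw [m1]; ring
      _ = ((j:ℝ) * (1+t) ^ (j-1)) * X ^ (k-1 : ℕ) * δ := by rw [m3]
      _ ≤ ((k:ℝ) * P) * X ^ (k-1 : ℕ) * δ := by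
          apply mul_le_mul_of_nonneg_right _ hδ0
          apply mul_le_mul_of_nonneg_right _ (by positivity)
          exact mul_le_mul hjkR m2 (by positivity) (by linarith)
      _ = (k:ℝ) * P * X ^ (k-1 : ℕ) * δ := by ring
  have hmaxb : maxDist k ζ (x ^ k) ≤ (k:ℝ) * P * X ^ (k-1 : ℕ) * δ :=
    maxDist_le (by positivity) hbound
  -- final numeric comparison
  have hC0 : (1 / 2 * (k : ℝ)⁻¹ * (1 + t) ^ (1 - (k : ℤ))) = 1 / (2 * (k:ℝ) * P) := by
    rw [C0_eq ht hk1, ← hP_def]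
    field_simp
  set Y : ℝ := X ^ (k-1 : ℕ) with hY_def
  have hY1 : 1 ≤ Y := one_le_pow₀ hX1
  have hY0 : 0 < Y := by linarith
  have eY1 : X ^ k = Y * X := by
    rw [hY_def, ← pow_succ]; congr 1; omega
  have eY2 : X ^ (2*k : ℕ) = Y * Y * X^2 := by
    rw [hY_def, ← pow_add, ← pow_add]; congr 1; omega
  have hxkinv : ((x ^ k : ℕ) : ℝ)⁻¹ = (Y * X)⁻¹ := by rw [hcast, eY1]
  rw [hC0, hxkinv]
  have hδle : δ ≤ (Y * Y * X^2)⁻¹ := by rw [← eY2]; exact hδ2k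
  have h5 : (k:ℝ) * P * Y * δ ≤ (k:ℝ) * P * Y * (Y * Y * X^2)⁻¹ :=
    mul_le_mul_of_nonneg_left hδle (by positivity)
  have h6 : (k:ℝ) * P * Y * (Y * Y * X^2)⁻¹ < 1 / (2 * (k:ℝ) * P) * (Y * X)⁻¹ := by
    have e1 : (k:ℝ) * P * Y * (Y * Y * X^2)⁻¹ = ((k:ℝ) * P * Y) / (Y * Y * X^2) := by
      rw [div_eq_mul_inv]
    have e2 : 1 / (2 * (k:ℝ) * P) * (Y * X)⁻¹ = 1 / (2 * (k:ℝ) * P * (Y * X)) := by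
      rw [one_div, one_div, ← mul_inv]
    rw [e1, e2]
    rw [div_lt_div_iff₀ (by positivity) (by positivity)]
    have hkey : 0 < (Y * Y * X) * (X - 2 * (k:ℝ)^2 * P^2) := by
      apply mul_pos (by positivity)
      linarith
    nlinarith [hkey]
  calc maxDist k ζ (x ^ k) ≤ (k:ℝ) * P * Y * δ := hmaxb
    _ ≤ (k:ℝ) * P * Y * (Y * Y * X^2)⁻¹ := h5
    _ < 1 / (2 * (k:ℝ) * P) * (Y * X)⁻¹ := h6


theorem stmt18 (ζ : ℝ) (hirr : Irrational ζ) :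
    lambdaConst 1 ζ = ⊤ ↔
      ∀ k : ℕ, 0 < k → ∃ x : ℕ, 0 < x ∧
        maxDist k ζ x < (1 / 2 * (k : ℝ)⁻¹ * (1 + |ζ|) ^ (1 - (k : ℤ))) * (x : ℝ)⁻¹ := by
  constructor
  · intro h k hk
    rw [lambdaConst] at h
    obtain ⟨a, ha, hlt⟩ := sSup_eq_top.mp h ((2*(k:ℝ) : ℝ) : EReal) (EReal.coe_lt_top _)
    rcases Set.mem_insert_iff.mp ha with rfl | ⟨η, rfl, hinf⟩
    · exfalso
      rw [show (0:EReal) = ((0:ℝ):EReal) from rfl] at hlt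
      have h1 : (2*(k:ℝ)) < 0 := EReal.coe_lt_coe_iff.mp hlt
      have h2 : (0:ℝ) < (k:ℝ) := by exact_mod_cast hk
      linarith
    · exact forward_core ζ k hk η (EReal.coe_lt_coe_iff.mp hlt) hinf
  · intro H
    rw [lambdaConst]
    apply sSup_eq_top.mpr
    intro y hy
    obtain ⟨ry, h1, _⟩ := EReal.exists_between_coe_real hy
    exact ⟨(ry:EReal), Set.mem_insert_iff.mpr (Or.inr ⟨ry, rfl, reverse_core ζ hirr H ry⟩), h1⟩
end
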